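/- Let 1 ≤ d ≤ r and 0 ≤ k ≤ r−1 be integers with d odd. Then last(ĝ^{r,d}_k) > 0 whenever 2k ≥ d, and last(ĝ^{r,d}_k) < 0 whenever 2k < d. -/

import Mathlib

/-- `vC r d i` is the number of tuples `(u₁,…,u_d) ∈ ℤ^d` with `0 ≤ uₗ ≤ r` for all `l`
and `u₁ + ⋯ + u_d = i`.  For `d = 0` this is `1` if `i = 0` and `0` otherwise. -/
def vC (r d : ℕ) (i : ℤ) : ℕ :=
  (Finset.univ.filter fun u : Fin d → Fin (r + 1) => (∑ l, ((u l : ℕ) : ℤ)) = i).card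

/-- `gHat r d k i` is the `(i+1)`-st entry (`0 ≤ i ≤ ⌊d/2⌋+1`) of the vector
`ĝ^{r,d}_k ∈ ℤ^{⌊d/2⌋+2}`, defined by `g₀ = C(r−1,d,−k)` and
`g_i = C(r−1,d,ir−k) − C(r−1,d,(i−1)r−k)` for `i ≥ 1`; for `k ≥ r` the vector
`ĝ^{r,d}_k` is the zero vector.  The vector `g^{r,d}_k ∈ ℤ^{⌊d/2⌋+1}` is obtained
from `ĝ^{r,d}_k` by deleting its last entry, so its entries are `gHat r d k i`
for `0 ≤ i ≤ ⌊d/2⌋`; `last (g^{r,d}_k) = gHat r d k (d/2)` and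
`last (ĝ^{r,d}_k) = gHat r d k (d/2 + 1)`. -/
def gHat (r d k : ℕ) (i : ℕ) : ℤ :=
  if r ≤ k then 0
  else if i = 0 then (vC (r - 1) d (-(k : ℤ)) : ℤ)
  else (vC (r - 1) d ((i : ℤ) * (r : ℤ) - (k : ℤ)) : ℤ)
       - (vC (r - 1) d (((i : ℤ) - 1) * (r : ℤ) - (k : ℤ)) : ℤ)

open Finset


lemma vC_zero_neg (s d : ℕ) {i : ℤ} (h : i < 0) : vC s d i = 0 := by
  rw [vC, Finset.card_eq_zero, Finset.filter_eq_empty_iff]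
  intro u _ hsum
  have : (0:ℤ) ≤ ∑ l, ((u l : ℕ) : ℤ) :=
    Finset.sum_nonneg (fun l _ => Int.natCast_nonneg _)
  omega

lemma vC_sum_le (s d : ℕ) (u : Fin d → Fin (s+1)) :
    (∑ l, ((u l : ℕ) : ℤ)) ≤ (d : ℤ) * s := by
  calc (∑ l, ((u l : ℕ) : ℤ)) ≤ ∑ _l : Fin d, (s:ℤ) :=
        Finset.sum_le_sum (fun l _ => by exact_mod_cast Nat.le_of_lt_succ (u l).isLt)
    _ = (d:ℤ) * s := by simp [mul_comm]

lemma vC_zero_gt (s d : ℕ) {i : ℤ} (h : (d:ℤ)*s < i) : vC s d i = 0 := by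
  rw [vC, Finset.card_eq_zero, Finset.filter_eq_empty_iff]
  intro u _ hsum
  have := vC_sum_le s d u
  omega

lemma vC_symm (s d : ℕ) (i : ℤ) : vC s d i = vC s d ((d:ℤ)*s - i) := by
  rw [vC, vC]
  refine Finset.card_bij' (fun u _ => fun l => (u l).rev) (fun u _ => fun l => (u l).rev)
    ?_ ?_ ?_ ?_
  · intro u hu
    simp only [Finset.mem_filter, Finset.mem_univ, true_and] at hu ⊢
    have : ∀ l : Fin d, (((u l).rev : ℕ) : ℤ) = (s:ℤ) - ((u l : ℕ) : ℤ) := by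
      intro l
      have h1 : ((u l).rev : ℕ) = s - (u l : ℕ) := by
        simp [Fin.val_rev]
      have h2 : (u l : ℕ) ≤ s := Nat.le_of_lt_succ (u l).isLt
      rw [h1]; omega
    rw [Finset.sum_congr rfl (fun l _ => this l), Finset.sum_sub_distrib, hu]
    simp [mul_comm]
  · intro u hu
    simp only [Finset.mem_filter, Finset.mem_univ, true_and] at hu ⊢
    have : ∀ l : Fin d, (((u l).rev : ℕ) : ℤ) = (s:ℤ) - ((u l : ℕ) : ℤ) := by
      intro l
      have h1 : ((u l).rev : ℕ) = s - (u l : ℕ) := by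
        simp [Fin.val_rev]
      have h2 : (u l : ℕ) ≤ s := Nat.le_of_lt_succ (u l).isLt
      rw [h1]; omega
    rw [Finset.sum_congr rfl (fun l _ => this l), Finset.sum_sub_distrib, hu]
    simp [mul_comm]
  · intro u _; funext l; simp [Fin.rev_rev]
  · intro u _; funext l; simp [Fin.rev_rev]

lemma vC_succ (s d : ℕ) (i : ℤ) :
    vC s (d+1) i = ∑ t : Fin (s+1), vC s d (i - ((t:ℕ):ℤ)) := by
  classical
  rw [vC]
  rw [Finset.card_eq_sum_card_fiberwise (f := fun u : Fin (d+1) → Fin (s+1) => u 0)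
    (t := Finset.univ) (fun _ _ => Finset.mem_univ _)]
  refine Finset.sum_congr rfl fun t _ => ?_
  rw [vC]
  refine Finset.card_bij' (fun u _ => fun l : Fin d => u l.succ)
    (fun v _ => Fin.cons t v) ?_ ?_ ?_ ?_
  · intro u hu
    simp only [Finset.mem_filter, Finset.mem_univ, true_and] at hu ⊢
    obtain ⟨h1, h2⟩ := hu
    rw [Fin.sum_univ_succ] at h1
    rw [← h1, h2]
    ring
  · intro v hv
    simp only [Finset.mem_filter, Finset.mem_univ, true_and] at hv ⊢
    constructor
    · rw [Fin.sum_univ_succ]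
      simp only [Fin.cons_zero, Fin.cons_succ]
      omega
    · simp
  · intro u hu
    simp only [Finset.mem_filter, Finset.mem_univ, true_and] at hu
    funext l
    refine Fin.cases ?_ ?_ l
    · simp [hu.2]
    · intro j; simp
  · intro v _
    funext l; simp


lemma vC_pos (s : ℕ) : ∀ (d : ℕ) (i : ℤ), 0 ≤ i → i ≤ (d:ℤ)*s → 0 < vC s d i := by
  intro d
  induction d with
  | zero =>
    intro i h0 h1
    have hi : i = 0 := by simp at h1; omega
    subst hi
    rw [vC]
    have : (Finset.univ.filter fun u : Fin 0 → Fin (s + 1) =>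
        (∑ l, ((u l : ℕ) : ℤ)) = 0) = Finset.univ := by
      ext u; simp
    rw [this]
    simp
  | succ d ih =>
    intro i h0 h1
    rw [vC_succ]
    set t : ℕ := min s i.toNat with ht
    have hts : t ≤ s := min_le_left _ _
    have hit : (t:ℤ) ≤ i := by
      have := Int.toNat_of_nonneg h0
      have : (t:ℕ) ≤ i.toNat := min_le_right _ _
      omega
    have hkey : 0 < vC s d (i - t) := by
      apply ih
      · omega
      · rcases le_total s i.toNat with h | h
        · have : t = s := by omega
          push_cast at h1 ⊢
          rw [this]
          linarith
        · have : (t:ℤ) = i := by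
            have := Int.toNat_of_nonneg h0
            omega
          rw [this]
          have hn : (0:ℤ) ≤ (d:ℤ)*s := mul_nonneg (by positivity) (by positivity)
          linarith
    calc 0 < vC s d (i - t) := hkey
      _ ≤ ∑ t' : Fin (s+1), vC s d (i - ((t':ℕ):ℤ)) := by
          exact Finset.single_le_sum (f := fun t' : Fin (s+1) => vC s d (i - ((t':ℕ):ℤ)))
            (fun _ _ => Nat.zero_le _) (Finset.mem_univ (⟨t, by omega⟩ : Fin (s+1)))

lemma vC_strict (s : ℕ) (hs : 1 ≤ s) :
    ∀ d : ℕ, 2 ≤ d → ∀ i j : ℤ, i < j → 0 ≤ j → 2*j ≤ (d:ℤ)*s → vC s d i < vC s d j := by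
  intro d
  induction d using Nat.strong_induction_on with
  | _ d IH =>
  intro hd i j hij hj0 hjd
  have hsZ : (1:ℤ) ≤ (s:ℤ) := by exact_mod_cast hs
  -- consecutive step
  have step : ∀ x : ℤ, 0 ≤ x → 2*(x+1) ≤ (d:ℤ)*s → vC s d x < vC s d (x+1) := by
    intro x hx0 hx
    obtain ⟨e, rfl⟩ : ∃ e, d = e + 1 := ⟨d-1, by omega⟩
    have he : 1 ≤ e := by omega
    have heZ : (1:ℤ) ≤ (e:ℤ) := by exact_mod_cast he
    have hx' : 2*(x+1) ≤ ((e:ℤ)+1)*(s:ℤ) := by push_cast at hx; linarith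
    rw [vC_succ, vC_succ]
    have hL : ∑ t : Fin (s+1), vC s e (x - ((t:ℕ):ℤ))
        = (∑ t : Fin s, vC s e (x - ((t:ℕ):ℤ))) + vC s e (x - s) := by
      rw [Fin.sum_univ_castSucc]
      simp
    have hR : ∑ t : Fin (s+1), vC s e ((x+1) - ((t:ℕ):ℤ))
        = vC s e (x+1) + ∑ t : Fin s, vC s e (x - ((t:ℕ):ℤ)) := by
      rw [Fin.sum_univ_succ]
      congr 1
      · simp
      · refine Finset.sum_congr rfl fun t _ => ?_
        congr 1
        push_cast [Fin.val_succ]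
        ring
    rw [hL, hR]
    have key : vC s e (x - s) < vC s e (x+1) := by
      by_cases hxs : x - s < 0
      · rw [vC_zero_neg s e hxs]
        apply vC_pos
        · omega
        · nlinarith
      · push_neg at hxs
        have he2 : 2 ≤ e := by
          rcases Nat.lt_or_ge e 2 with h | h
          · exfalso
            have : e = 1 := by omega
            rw [this] at hx'
            push_cast at hx'
            omega
          · exact h
        by_cases hcase : 2*(x+1) ≤ (e:ℤ)*s
        · exact IH e (by omega) he2 (x-s) (x+1) (by omega) (by omega) hcase
        · push_neg at hcase
          rw [vC_symm s e (x+1)]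
          refine IH e (by omega) he2 (x-s) ((e:ℤ)*s - (x+1)) ?_ ?_ ?_
          · linarith
          · linarith
          · linarith
    omega
  by_cases hi0 : i < 0
  · rw [vC_zero_neg s d hi0]
    exact vC_pos s d j hj0 (by linarith)
  · push_neg at hi0
    have main : ∀ j' : ℤ, i+1 ≤ j' → 2*j' ≤ (d:ℤ)*s → vC s d i < vC s d j' := by
      refine fun j' hj' => Int.le_induction (motive := fun j' _ => 2*j' ≤ (d:ℤ)*s → vC s d i < vC s d j') ?_ ?_ j' hj'
      · intro h2; exact step i hi0 h2
      · intro n hn ihn h2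
        have h3 : 2*n ≤ (d:ℤ)*s := by linarith
        calc vC s d i < vC s d n := ihn h3
          _ < vC s d (n+1) := step n (by omega) (by linarith)
    exact main j hij hjd


/-- Let `1 ≤ d ≤ r` and `0 ≤ k ≤ r−1` with `d` odd.  Then `last(ĝ^{r,d}_k) > 0`
whenever `2k ≥ d`, and `last(ĝ^{r,d}_k) < 0` whenever `2k < d`. -/
theorem stmt_13 (r d k : ℕ) (hd : 1 ≤ d) (hdr : d ≤ r) (hodd : Odd d) (hk : k ≤ r - 1) :
    (d ≤ 2 * k → 0 < gHat r d k (d / 2 + 1)) ∧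
    (2 * k < d → gHat r d k (d / 2 + 1) < 0) := by
  obtain ⟨m, hm⟩ := hodd
  have hr1 : 1 ≤ r := le_trans hd hdr
  have hkr : ¬ r ≤ k := by omega
  have hd2 : d / 2 = m := by omega
  set s := r - 1 with hs_def
  have hrs : r = s + 1 := by omega
  -- integer abbreviations and facts
  have hR : (r:ℤ) = (s:ℤ) + 1 := by exact_mod_cast congrArg (Nat.cast : ℕ → ℤ) hrs
  have hK0 : (0:ℤ) ≤ (k:ℤ) := Int.natCast_nonneg _
  have hKS : (k:ℤ) ≤ (s:ℤ) := by exact_mod_cast (by omega : k ≤ s)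
  have hM0 : (0:ℤ) ≤ (m:ℤ) := Int.natCast_nonneg _
  have hDS : (2*(m:ℤ)+1) ≤ (r:ℤ) := by exact_mod_cast (by omega : 2*m+1 ≤ r)
  have hdc : ((d:ℕ):ℤ) = 2*(m:ℤ)+1 := by exact_mod_cast congrArg (Nat.cast : ℕ → ℤ) hm
  have ea : (((d/2+1 : ℕ)):ℤ) * r - k = ((m:ℤ)+1)*(r:ℤ) - k := by
    push_cast [hd2]; ring
  have eb : ((((d/2+1 : ℕ)):ℤ) - 1) * r - k = (m:ℤ)*(r:ℤ) - k := by
    push_cast [hd2]; ring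
  have hgh : gHat r d k (d/2+1)
      = (vC s d (((m:ℤ)+1)*(r:ℤ) - k) : ℤ) - (vC s d ((m:ℤ)*(r:ℤ) - k) : ℤ) := by
    rw [gHat, if_neg hkr, if_neg (by omega : ¬(d/2+1 = 0)), ea, eb]
  set a : ℤ := ((m:ℤ)+1)*(r:ℤ) - k with ha
  set b : ℤ := (m:ℤ)*(r:ℤ) - k with hb
  have hds : (d:ℤ)*(s:ℤ) = 2*(m:ℤ)*(r:ℤ) + (r:ℤ) - 2*(m:ℤ) - 1 := by
    rw [hdc, hR]; ring
  constructor
  · -- d ≤ 2k : positive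
    intro h2k
    have h2k' : 2*(m:ℤ)+2 ≤ 2*(k:ℤ) := by exact_mod_cast (by omega : 2*m+2 ≤ 2*k)
    rw [hgh, sub_pos, Nat.cast_lt]
    rcases Nat.eq_zero_or_pos m with hm0 | hm1
    · -- d = 1
      subst hm0
      have hbneg : b < 0 := by rw [hb]; push_cast; omega
      rw [vC_zero_neg s d hbneg]
      apply vC_pos
      · rw [ha]; push_cast; omega
      · rw [ha, hds]; push_cast; omega
    · have hm1' : (1:ℤ) ≤ (m:ℤ) := by exact_mod_cast hm1
      have hs1 : 1 ≤ s := by omega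
      have hd2' : 2 ≤ d := by omega
      have hMR : (r:ℤ) ≤ (m:ℤ)*(r:ℤ) := le_mul_of_one_le_left (by linarith) hm1'
      have hab : b < a := by rw [ha, hb]; nlinarith
      have hb0 : 0 ≤ b := by rw [hb]; linarith
      by_cases hca : 2*a ≤ (d:ℤ)*(s:ℤ)
      · exact vC_strict s hs1 d hd2' b a hab (by linarith) hca
      · push_neg at hca
        rw [vC_symm s d a]
        refine vC_strict s hs1 d hd2' b ((d:ℤ)*(s:ℤ) - a) ?_ ?_ ?_
        · rw [hds, ha, hb]; linarith
        · rw [hds, ha]; rw [hds, ha, hb] at *; linarith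
        · linarith
  · -- 2k < d : negative
    intro h2k
    have h2k' : 2*(k:ℤ) ≤ 2*(m:ℤ) := by exact_mod_cast (by omega : 2*k ≤ 2*m)
    rw [hgh, sub_neg, Nat.cast_lt]
    rw [vC_symm s d a]
    have hav : (d:ℤ)*(s:ℤ) - a = (m:ℤ)*(r:ℤ) + (k:ℤ) - 2*(m:ℤ) - 1 := by
      rw [hds, ha]; ring
    have hMR : (m:ℤ) ≤ (m:ℤ)*(r:ℤ) := le_mul_of_one_le_right hM0 (by linarith)
    have hb0 : 0 ≤ b := by rw [hb]; linarith
    have h2b : 2*b ≤ (d:ℤ)*(s:ℤ) := by rw [hb, hds]; linarith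
    by_cases hneg : (d:ℤ)*(s:ℤ) - a < 0
    · rw [vC_zero_neg s d hneg]
      exact vC_pos s d b hb0 (by linarith)
    · push_neg at hneg
      have hm1 : 1 ≤ m := by
        by_contra hc
        have : m = 0 := by omega
        rw [this] at hav
        simp at hav
        omega
      have hs1 : 1 ≤ s := by omega
      refine vC_strict s hs1 d (by omega) ((d:ℤ)*(s:ℤ) - a) b ?_ hb0 h2b
      rw [hav, hb]; linarith
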